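/- Let a ∈ ℝ, ℓ > 0, δ > 0, integers m, n ≥ 1, 0 < ε < 1/2, and let χ : ℝ → ℝ be continuous with 0 ≤ χ(x) ≤ 1 for all x and χ(x) = 1 for all x ∈ [ε, 1−ε]. Define ψ(x,y) = χ((x−a)/ℓ)·sin(πm(x−a)/ℓ)·sin(πny/δ). Then (ℓδ/4)·(1 − 4ε) ≤ ∫_{[a,a+ℓ]×[0,δ]} ψ(x,y)² dx dy ≤ ℓδ/4. -/

import Mathlib

open Real MeasureTheory

/-- integral of sin(c x)^2 over a full half-period multiple is length/2 -/
lemma sin_sq_full (c L : ℝ) (hL : 0 < L) (k : ℕ) (hck : c * L = k * π) (hc : c ≠ 0) :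
    ∫ x in (0:ℝ)..L, Real.sin (c * x) ^ 2 = L / 2 := by
  rw [intervalIntegral.integral_comp_mul_left (fun x => Real.sin x ^ 2) hc]
  rw [integral_sin_sq]
  rw [mul_zero, hck, Real.sin_nat_mul_pi, Real.sin_zero]
  simp only [smul_eq_mul]
  field_simp
  nlinarith [hck]

set_option maxHeartbeats 1000000 in
theorem stmt_13 (a ℓ δ : ℝ) (hℓ : 0 < ℓ) (hδ : 0 < δ)
    (m n : ℕ) (hm : 1 ≤ m) (hn : 1 ≤ n)
    (ε : ℝ) (hε : 0 < ε) (hε' : ε < 1 / 2)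
    (χ : ℝ → ℝ) (hχ_cont : Continuous χ)
    (hχ_nonneg : ∀ x, 0 ≤ χ x) (hχ_le : ∀ x, χ x ≤ 1)
    (hχ_one : ∀ x ∈ Set.Icc ε (1 - ε), χ x = 1)
    (ψ : ℝ → ℝ → ℝ)
    (hψ : ∀ x y, ψ x y =
      χ ((x - a) / ℓ) * Real.sin (π * m * (x - a) / ℓ) * Real.sin (π * n * y / δ)) :
    ℓ * δ / 4 * (1 - 4 * ε)
      ≤ ∫ z in Set.Icc a (a + ℓ) ×ˢ Set.Icc (0 : ℝ) δ, (ψ z.1 z.2) ^ 2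
    ∧ ∫ z in Set.Icc a (a + ℓ) ×ˢ Set.Icc (0 : ℝ) δ, (ψ z.1 z.2) ^ 2 ≤ ℓ * δ / 4 := by
  set c1 : ℝ := π * m / ℓ with hc1def
  set c2 : ℝ := π * n / δ with hc2def
  have hπ := Real.pi_pos
  have hm0 : (0:ℝ) < m := by exact_mod_cast hm
  have hn0 : (0:ℝ) < n := by exact_mod_cast hn
  have hc1 : c1 ≠ 0 := by positivity
  have hc2 : c2 ≠ 0 := by positivity
  set F : ℝ → ℝ := fun x => (χ ((x - a) / ℓ) * Real.sin (c1 * (x - a))) ^ 2 with hF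
  set G : ℝ → ℝ := fun y => Real.sin (c2 * y) ^ 2 with hG
  have harg1 : ∀ x : ℝ, π * m * (x - a) / ℓ = c1 * (x - a) := by
    intro x; rw [hc1def]; ring
  have harg2 : ∀ y : ℝ, π * n * y / δ = c2 * y := by
    intro y; rw [hc2def]; ring
  -- factor the integral
  have hsplit : (∫ z in Set.Icc a (a + ℓ) ×ˢ Set.Icc (0 : ℝ) δ, (ψ z.1 z.2) ^ 2)
      = (∫ x in Set.Icc a (a + ℓ), F x) * ∫ y in Set.Icc (0:ℝ) δ, G y := by
    have hpt : (fun z : ℝ × ℝ => ψ z.1 z.2 ^ 2) = fun z : ℝ × ℝ => F z.1 * G z.2 := by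
      funext z
      rw [hψ, harg1, harg2, hF, hG]
      ring
    rw [hpt, Measure.volume_eq_prod, setIntegral_prod_mul]
  -- continuity
  have hcF : Continuous F := by
    apply Continuous.pow
    exact ((hχ_cont.comp ((continuous_id.sub continuous_const).div_const ℓ)).mul
      (Real.continuous_sin.comp (continuous_const.mul (continuous_id.sub continuous_const))))
  have hcG : Continuous G := (Real.continuous_sin.comp (continuous_const.mul continuous_id)).pow 2
  have hcS : Continuous fun x => Real.sin (c1 * (x - a)) ^ 2 :=
    (Real.continuous_sin.comp (continuous_const.mul (continuous_id.sub continuous_const))).pow 2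
  -- y-integral
  have hIG : (∫ y in Set.Icc (0:ℝ) δ, G y) = δ / 2 := by
    rw [MeasureTheory.integral_Icc_eq_integral_Ioc,
      ← intervalIntegral.integral_of_le hδ.le]
    exact sin_sq_full c2 δ hδ n (by rw [hc2def]; field_simp) hc2
  -- full x-integral of sin^2
  have hfull : (∫ x in a..(a + ℓ), Real.sin (c1 * (x - a)) ^ 2) = ℓ / 2 := by
    rw [intervalIntegral.integral_comp_sub_right (fun u => Real.sin (c1 * u) ^ 2) a]
    rw [show a - a = (0:ℝ) by ring, show a + ℓ - a = ℓ by ring]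
    exact sin_sq_full c1 ℓ hℓ m (by rw [hc1def]; field_simp) hc1
  have hεℓ : a ≤ a + ε * ℓ := by nlinarith
  have hmidle : a + ε * ℓ ≤ a + (1 - ε) * ℓ := by nlinarith
  have hrt : a + (1 - ε) * ℓ ≤ a + ℓ := by nlinarith
  have hii : ∀ u v : ℝ, IntervalIntegrable (fun x => Real.sin (c1 * (x - a)) ^ 2)
      volume u v := fun u v => hcS.intervalIntegrable u v
  -- side pieces small
  have hleft : (∫ x in a..(a + ε * ℓ), Real.sin (c1 * (x - a)) ^ 2) ≤ ε * ℓ := by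
    calc (∫ x in a..(a + ε * ℓ), Real.sin (c1 * (x - a)) ^ 2)
        ≤ ∫ _x in a..(a + ε * ℓ), (1:ℝ) := by
          apply intervalIntegral.integral_mono_on hεℓ (hii _ _)
            (intervalIntegrable_const)
          intro x _; exact Real.sin_sq_le_one _
      _ = ε * ℓ := by simp
  have hright : (∫ x in (a + (1 - ε) * ℓ)..(a + ℓ), Real.sin (c1 * (x - a)) ^ 2)
      ≤ ε * ℓ := by
    calc (∫ x in (a + (1 - ε) * ℓ)..(a + ℓ), Real.sin (c1 * (x - a)) ^ 2)
        ≤ ∫ _x in (a + (1 - ε) * ℓ)..(a + ℓ), (1:ℝ) := by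
          apply intervalIntegral.integral_mono_on hrt (hii _ _)
            (intervalIntegrable_const)
          intro x _; exact Real.sin_sq_le_one _
      _ = ε * ℓ := by simp; ring
  -- middle piece
  have hadd1 : (∫ x in a..(a + ε * ℓ), Real.sin (c1 * (x - a)) ^ 2)
      + (∫ x in (a + ε * ℓ)..(a + (1 - ε) * ℓ), Real.sin (c1 * (x - a)) ^ 2)
      = ∫ x in a..(a + (1 - ε) * ℓ), Real.sin (c1 * (x - a)) ^ 2 :=
    intervalIntegral.integral_add_adjacent_intervals (hii _ _) (hii _ _)
  have hadd2 : (∫ x in a..(a + (1 - ε) * ℓ), Real.sin (c1 * (x - a)) ^ 2)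
      + (∫ x in (a + (1 - ε) * ℓ)..(a + ℓ), Real.sin (c1 * (x - a)) ^ 2)
      = ∫ x in a..(a + ℓ), Real.sin (c1 * (x - a)) ^ 2 :=
    intervalIntegral.integral_add_adjacent_intervals (hii _ _) (hii _ _)
  have hmid : ℓ / 2 - 2 * (ε * ℓ)
      ≤ ∫ x in (a + ε * ℓ)..(a + (1 - ε) * ℓ), Real.sin (c1 * (x - a)) ^ 2 := by
    have := hfull
    linarith [hleft, hright, hadd1, hadd2]
  -- lower bound on ∫ F
  have hFnn : ∀ x : ℝ, 0 ≤ F x := fun x => sq_nonneg _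
  have hFlow : ℓ / 2 - 2 * (ε * ℓ) ≤ ∫ x in Set.Icc a (a + ℓ), F x := by
    have hsub : (∫ x in Set.Icc (a + ε * ℓ) (a + (1 - ε) * ℓ), F x)
        ≤ ∫ x in Set.Icc a (a + ℓ), F x := by
      apply setIntegral_mono_set (hcF.integrableOn_Icc)
        (Filter.Eventually.of_forall fun x => hFnn x)
      exact Filter.Eventually.of_forall
        (Set.Icc_subset_Icc (by linarith) (by linarith))
    have heqmid : (∫ x in Set.Icc (a + ε * ℓ) (a + (1 - ε) * ℓ), F x)
        = ∫ x in (a + ε * ℓ)..(a + (1 - ε) * ℓ), Real.sin (c1 * (x - a)) ^ 2 := by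
      rw [MeasureTheory.integral_Icc_eq_integral_Ioc,
        ← intervalIntegral.integral_of_le hmidle]
      apply intervalIntegral.integral_congr
      intro x hx
      rw [Set.uIcc_of_le hmidle] at hx
      have h1 : ε ≤ (x - a) / ℓ := by
        rw [le_div_iff₀ hℓ]; nlinarith [hx.1]
      have h2 : (x - a) / ℓ ≤ 1 - ε := by
        rw [div_le_iff₀ hℓ]; nlinarith [hx.2]
      rw [hF]
      simp only
      rw [hχ_one _ ⟨h1, h2⟩, one_mul]
    linarith [hmid, hsub, heqmid.ge, heqmid.le]
  -- upper bound on ∫ F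
  have hFup : (∫ x in Set.Icc a (a + ℓ), F x) ≤ ℓ / 2 := by
    have hmono : (∫ x in Set.Icc a (a + ℓ), F x)
        ≤ ∫ x in Set.Icc a (a + ℓ), Real.sin (c1 * (x - a)) ^ 2 := by
      apply setIntegral_mono_on (hcF.integrableOn_Icc) (hcS.integrableOn_Icc)
        measurableSet_Icc
      intro x _
      have h1 := hχ_nonneg ((x - a) / ℓ)
      have h2 := hχ_le ((x - a) / ℓ)
      rw [hF]
      simp only
      rw [mul_pow]
      exact mul_le_of_le_one_left (sq_nonneg _) (pow_le_one₀ h1 h2)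
    have : (∫ x in Set.Icc a (a + ℓ), Real.sin (c1 * (x - a)) ^ 2) = ℓ / 2 := by
      rw [MeasureTheory.integral_Icc_eq_integral_Ioc,
        ← intervalIntegral.integral_of_le (by linarith : a ≤ a + ℓ)]
      exact hfull
    linarith
  -- combine
  rw [hsplit, hIG]
  have hδ2 : (0:ℝ) ≤ δ / 2 := by linarith
  constructor
  · calc ℓ * δ / 4 * (1 - 4 * ε) = (ℓ / 2 - 2 * (ε * ℓ)) * (δ / 2) := by ring
      _ ≤ (∫ x in Set.Icc a (a + ℓ), F x) * (δ / 2) :=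
        mul_le_mul_of_nonneg_right hFlow hδ2
  · calc (∫ x in Set.Icc a (a + ℓ), F x) * (δ / 2) ≤ (ℓ / 2) * (δ / 2) :=
        mul_le_mul_of_nonneg_right hFup hδ2
      _ = ℓ * δ / 4 := by ring
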